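/- Universal lower bound on steady-state queue lengths in a saturated switch (Proposition 3.1, fixed-ε version). Fix n ≥ 1, 0 < ε < 1, and ν ∈ F, and suppose the arrival means are λ_{ij} = (1−ε)ν_{ij} with variances σ_{ij}². Let the schedule be chosen by an arbitrary scheduling policy, i.e., any map from states q ∈ ℕ^{n×n} to probability distributions over schedules (0–1 matrices with at most one 1 per row and per column), with the chosen schedule independent of the current arrivals. If π is an invariant (stationary) distribution of the resulting Markov chain on ℕ^{n×n} such that E_π[(∑_{ij} q̄_{ij})²] < ∞, then E_π[∑_{ij} q̄_{ij}] ≥ ‖σ‖²/(2ε) − n(1−ε)/2, where ‖σ‖² = ∑_{ij} σ_{ij}². -/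

import Mathlib

open scoped BigOperators ENNReal

namespace SwitchModel

/-- Next queue state: `q⁺_{ij} = max(q_{ij} + a_{ij} − s_{ij}, 0)` (truncated `ℕ` subtraction). -/
def nextQ (n : ℕ) (q a s : Fin n → Fin n → ℕ) : Fin n → Fin n → ℕ :=
  fun i j => q i j + a i j - s i j

/-- A 0–1 matrix with at most one 1 per row and per column. -/
def IsSchedule (n : ℕ) (s : Fin n → Fin n → ℕ) : Prop :=
  (∀ i j, s i j ≤ 1) ∧ (∀ i, (∑ j, s i j) ≤ 1) ∧ (∀ j, (∑ i, s i j) ≤ 1)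

/-- A permutation matrix: exactly one 1 per row and per column. -/
def IsPerm (n : ℕ) (s : Fin n → Fin n → ℕ) : Prop :=
  (∀ i j, s i j ≤ 1) ∧ (∀ i, (∑ j, s i j) = 1) ∧ (∀ j, (∑ i, s i j) = 1)

/-- MaxWeight selection: `sched q` is a permutation matrix maximizing `∑ q_{ij} s_{ij}`. -/
def IsMaxWeight (n : ℕ) (sched : (Fin n → Fin n → ℕ) → (Fin n → Fin n → ℕ)) : Prop :=
  ∀ q, IsPerm n (sched q) ∧
    ∀ s, IsPerm n s → (∑ i, ∑ j, q i j * s i j) ≤ (∑ i, ∑ j, q i j * sched q i j)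

/-- Joint arrival probability: the entries are mutually independent with marginals `A i j`. -/
noncomputable def jointA (n : ℕ) (A : Fin n → Fin n → ℕ → ℝ≥0∞) (a : Fin n → Fin n → ℕ) : ℝ≥0∞ :=
  ∏ i, ∏ j, A i j (a i j)

/-- `A i j` is a probability distribution on `ℕ` supported on `[0, amax]`,
with mean `lam i j` and variance `(sig i j)^2`. -/
def ArrivalDist (n : ℕ) (A : Fin n → Fin n → ℕ → ℝ≥0∞)
    (lam sig : Fin n → Fin n → ℝ) (amax : ℕ) : Prop :=
  (∀ i j, (∑' k : ℕ, A i j k) = 1) ∧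
  (∀ i j k, A i j k ≠ 0 → k ≤ amax) ∧
  (∀ i j, (∑' k : ℕ, (A i j k).toReal * (k : ℝ)) = lam i j) ∧
  (∀ i j, (∑' k : ℕ, (A i j k).toReal * ((k : ℝ) - lam i j) ^ 2) = (sig i j) ^ 2)

/-- Transition kernel of the switch under a deterministic scheduling map `sched`. -/
noncomputable def kernelMW (n : ℕ) (A : Fin n → Fin n → ℕ → ℝ≥0∞)
    (sched : (Fin n → Fin n → ℕ) → (Fin n → Fin n → ℕ))
    (q q' : Fin n → Fin n → ℕ) : ℝ≥0∞ :=
  ∑' a : Fin n → Fin n → ℕ, jointA n A a * (if nextQ n q a (sched q) = q' then 1 else 0)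

/-- Transition kernel of the switch under a randomized scheduling policy `pol`
(the schedule is chosen independently of the current arrivals). -/
noncomputable def kernelPol (n : ℕ) (A : Fin n → Fin n → ℕ → ℝ≥0∞)
    (pol : (Fin n → Fin n → ℕ) → (Fin n → Fin n → ℕ) → ℝ≥0∞)
    (q q' : Fin n → Fin n → ℕ) : ℝ≥0∞ :=
  ∑' a : Fin n → Fin n → ℕ, ∑' s : Fin n → Fin n → ℕ,
    jointA n A a * pol q s * (if nextQ n q a s = q' then 1 else 0)

/-- `pd` is an invariant (stationary) probability distribution of the kernel `P`. -/
def IsInvariant (n : ℕ)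
    (P : (Fin n → Fin n → ℕ) → (Fin n → Fin n → ℕ) → ℝ≥0∞)
    (pd : (Fin n → Fin n → ℕ) → ℝ≥0∞) : Prop :=
  (∑' q : Fin n → Fin n → ℕ, pd q) = 1 ∧
  ∀ q', (∑' q : Fin n → Fin n → ℕ, pd q * P q q') = pd q'

/-- The face `F`: nonnegative matrices with all row and column sums equal to 1. -/
def memF (n : ℕ) (ν : Fin n → Fin n → ℝ) : Prop :=
  (∀ i j, 0 ≤ ν i j) ∧ (∀ i, (∑ j, ν i j) = 1) ∧ (∀ j, (∑ i, ν i j) = 1)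

/-- Steady-state expectation of the total queue length `∑_{ij} q_{ij}`. -/
noncomputable def Etot (n : ℕ) (pd : (Fin n → Fin n → ℕ) → ℝ≥0∞) : ℝ≥0∞ :=
  ∑' q : Fin n → Fin n → ℕ, pd q * (∑ i, ∑ j, (q i j : ℝ≥0∞))

/-- Steady-state expectation of `(∑_{ij} q_{ij})²`. -/
noncomputable def Etot2 (n : ℕ) (pd : (Fin n → Fin n → ℕ) → ℝ≥0∞) : ℝ≥0∞ :=
  ∑' q : Fin n → Fin n → ℕ, pd q * (∑ i, ∑ j, (q i j : ℝ≥0∞)) ^ 2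

/-- Euclidean norm on `ℝ^{n×n}`. -/
noncomputable def normE (n : ℕ) (x : Fin n → Fin n → ℝ) : ℝ :=
  Real.sqrt (∑ i, ∑ j, x i j ^ 2)

/-- The cone `K = {x : x_{ij} = w_i + w̃_j, w, w̃ ≥ 0}`. -/
def coneK (n : ℕ) : Set (Fin n → Fin n → ℝ) :=
  {x | ∃ w wt : Fin n → ℝ, (∀ i, 0 ≤ w i) ∧ (∀ j, 0 ≤ wt j) ∧ ∀ i j, x i j = w i + wt j}

/-- Embedding of queue states into `ℝ^{n×n}`. -/
def toR (n : ℕ) (q : Fin n → Fin n → ℕ) : Fin n → Fin n → ℝ :=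
  fun i j => (q i j : ℝ)

/-- `proj` is the nearest-point projection onto the cone `K`. -/
def IsConeProj (n : ℕ) (proj : (Fin n → Fin n → ℝ) → (Fin n → Fin n → ℝ)) : Prop :=
  ∀ x, proj x ∈ coneK n ∧ ∀ y ∈ coneK n, normE n (x - proj x) ≤ normE n (x - y)

/-- Bernoulli distribution on `ℕ` with success probability `p`. -/
noncomputable def bern (p : ℝ) : ℕ → ℝ≥0∞ :=
  fun k => if k = 0 then ENNReal.ofReal (1 - p) else if k = 1 then ENNReal.ofReal p else 0

end SwitchModel

open SwitchModel


lemma tsum_pi_prod {m : ℕ} {α : Type*} (h : Fin m → α → ℝ≥0∞) :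
    ∑' f : Fin m → α, ∏ i, h i (f i) = ∏ i, ∑' x, h i x := by
  induction m with
  | zero =>
    simp only [Finset.univ_eq_empty, Finset.prod_empty]
    rw [tsum_eq_single (fun i : Fin 0 => i.elim0)]
    intro b hb; exact absurd (Subsingleton.elim b _) hb
  | succ m ih =>
    rw [← (Fin.consEquiv (fun _ : Fin (m+1) => α)).tsum_eq, ENNReal.tsum_prod']
    simp only [Fin.consEquiv_apply, Fin.prod_univ_succ, Fin.cons_zero, Fin.cons_succ]
    calc ∑' (x : α) (f : Fin m → α), h 0 x * ∏ i, h i.succ (f i)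
        = ∑' (x : α), h 0 x * ∑' f : Fin m → α, ∏ i, h i.succ (f i) := by
          congr 1; ext x; exact ENNReal.tsum_mul_left
      _ = (∑' x, h 0 x) * ∏ i : Fin m, ∑' x, h i.succ x := by
          rw [ih]; exact ENNReal.tsum_mul_right

lemma tsum_pi_prod_mul {m : ℕ} {α : Type*} (h : Fin m → α → ℝ≥0∞)
    (hmass : ∀ i, ∑' x, h i x = 1) (i₀ : Fin m) (g : α → ℝ≥0∞) :
    ∑' f : Fin m → α, (∏ i, h i (f i)) * g (f i₀) = ∑' x, h i₀ x * g x := by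
  have key : ∀ f : Fin m → α, (∏ i, h i (f i)) * g (f i₀)
      = ∏ i, (h i (f i) * if i = i₀ then g (f i) else 1) := by
    intro f
    rw [Finset.prod_mul_distrib]
    congr 1
    rw [Finset.prod_ite_eq' Finset.univ i₀ (fun i => g (f i))]
    simp
  simp only [key]
  rw [tsum_pi_prod (fun i x => h i x * if i = i₀ then g x else 1)]
  have : ∀ i : Fin m, (∑' x, h i x * if i = i₀ then g x else 1)
      = if i = i₀ then ∑' x, h i₀ x * g x else 1 := by
    intro i
    by_cases hi : i = i₀ <;> simp [hi, hmass i]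
  simp only [this]
  rw [Finset.prod_ite_eq' Finset.univ i₀ (fun _ => ∑' x, h i₀ x * g x)]
  simp

lemma tsum_pi_prod_mul₂ {m : ℕ} {α : Type*} (h : Fin m → α → ℝ≥0∞)
    (hmass : ∀ i, ∑' x, h i x = 1) (i₀ i₁ : Fin m) (hne : i₀ ≠ i₁) (g₀ g₁ : α → ℝ≥0∞) :
    ∑' f : Fin m → α, (∏ i, h i (f i)) * (g₀ (f i₀) * g₁ (f i₁))
      = (∑' x, h i₀ x * g₀ x) * (∑' x, h i₁ x * g₁ x) := by
  have key : ∀ f : Fin m → α, (∏ i, h i (f i)) * (g₀ (f i₀) * g₁ (f i₁))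
      = ∏ i, (h i (f i) * ((if i = i₀ then g₀ (f i) else 1) * (if i = i₁ then g₁ (f i) else 1))) := by
    intro f
    simp only [Finset.prod_mul_distrib]
    rw [Finset.prod_ite_eq' Finset.univ i₀ (fun i => g₀ (f i)),
        Finset.prod_ite_eq' Finset.univ i₁ (fun i => g₁ (f i))]
    simp
  simp only [key]
  rw [tsum_pi_prod (fun i x => h i x * ((if i = i₀ then g₀ x else 1) * if i = i₁ then g₁ x else 1))]
  have hval : ∀ i : Fin m, (∑' x, h i x * ((if i = i₀ then g₀ x else 1) * (if i = i₁ then g₁ x else 1)))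
      = if i = i₀ then (∑' x, h i₀ x * g₀ x) else if i = i₁ then (∑' x, h i₁ x * g₁ x) else 1 := by
    intro i
    by_cases h0 : i = i₀
    · subst h0; simp [hne, hmass]
    · by_cases h1 : i = i₁
      · subst h1; simp [Ne.symm hne, hmass]
      · simp [h0, h1, hmass i]
  simp only [hval]
  rw [← Finset.prod_subset (Finset.subset_univ ({i₀, i₁} : Finset (Fin m)))
      (by intro x _ hx; simp only [Finset.mem_insert, Finset.mem_singleton, not_or] at hx
          simp [hx.1, hx.2])]
  rw [Finset.prod_insert (by simpa using hne), Finset.prod_singleton]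
  simp [hne, Ne.symm hne]

lemma aux_coord_moments (p : ℕ → ℝ≥0∞) (B : ℕ) (lam sg2 : ℝ)
    (h1 : ∑' k, p k = 1) (h2 : ∀ k, p k ≠ 0 → k ≤ B)
    (h3 : ∑' k : ℕ, (p k).toReal * (k : ℝ) = lam)
    (h4 : ∑' k : ℕ, (p k).toReal * ((k : ℝ) - lam) ^ 2 = sg2) :
    (∑' k : ℕ, p k * (k : ℝ≥0∞)) = ENNReal.ofReal lam ∧
    (∑' k : ℕ, p k * (k : ℝ≥0∞) ^ 2) = ENNReal.ofReal (sg2 + lam ^ 2) := by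
  set S := Finset.range (B + 1) with hS
  have h0 : ∀ k, k ∉ S → p k = 0 := by
    intro k hk
    by_contra hne
    exact hk (Finset.mem_range.mpr (Nat.lt_succ_of_le (h2 k hne)))
  have htop : ∀ k, p k ≠ ⊤ := by
    intro k
    have : p k ≤ 1 := h1 ▸ ENNReal.le_tsum k
    exact (this.trans_lt ENNReal.one_lt_top).ne
  -- generic conversion
  have conv : ∀ r : ℕ → ℝ, (∀ k, 0 ≤ r k) →
      (∑' k : ℕ, p k * ENNReal.ofReal (r k)) = ENNReal.ofReal (∑ k ∈ S, (p k).toReal * r k) := by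
    intro r hr
    rw [tsum_eq_sum (s := S) (fun k hk => by rw [h0 k hk, zero_mul])]
    rw [ENNReal.ofReal_sum_of_nonneg (fun k _ => mul_nonneg ENNReal.toReal_nonneg (hr k))]
    refine Finset.sum_congr rfl fun k _ => ?_
    rw [ENNReal.ofReal_mul ENNReal.toReal_nonneg, ENNReal.ofReal_toReal (htop k)]
  have realconv : ∀ r : ℕ → ℝ, (∑' k : ℕ, (p k).toReal * r k) = ∑ k ∈ S, (p k).toReal * r k := by
    intro r
    exact tsum_eq_sum (fun k hk => by rw [h0 k hk]; simp)
  have hm : ∑ k ∈ S, (p k).toReal * (k : ℝ) = lam := by rw [← realconv]; exact h3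
  have hv : ∑ k ∈ S, (p k).toReal * ((k : ℝ) - lam) ^ 2 = sg2 := by rw [← realconv]; exact h4
  have hmass : ∑ k ∈ S, (p k).toReal = 1 := by
    have := congrArg ENNReal.toReal (tsum_eq_sum (L := SummationFilter.unconditional _) (s := S) (fun k hk => h0 k hk) ▸ h1)
    rw [ENNReal.toReal_sum (fun k _ => htop k)] at this
    simpa using this
  have hT1 : (∑' k : ℕ, p k * (k : ℝ≥0∞)) = ENNReal.ofReal lam := by
    have := conv (fun k => (k : ℝ)) (fun k => Nat.cast_nonneg k)
    simp only [ENNReal.ofReal_natCast] at this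
    rw [this, hm]
  have hT2 : (∑' k : ℕ, p k * (k : ℝ≥0∞) ^ 2) = ENNReal.ofReal (sg2 + lam ^ 2) := by
    have := conv (fun k => (k : ℝ) ^ 2) (fun k => sq_nonneg _)
    simp only [ENNReal.ofReal_pow (Nat.cast_nonneg _), ENNReal.ofReal_natCast] at this
    rw [this]
    congr 1
    calc ∑ k ∈ S, (p k).toReal * (k : ℝ) ^ 2
        = ∑ k ∈ S, ((p k).toReal * ((k : ℝ) - lam) ^ 2 + (2 * lam) * ((p k).toReal * k)
            - lam ^ 2 * (p k).toReal) := Finset.sum_congr rfl fun k _ => by ring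
      _ = sg2 + lam ^ 2 := by
          rw [Finset.sum_sub_distrib, Finset.sum_add_distrib, ← Finset.mul_sum, ← Finset.mul_sum,
            hv, hm, hmass]
          ring
  exact ⟨hT1, hT2⟩

section Row
variable {m : ℕ} (pcol : Fin m → ℕ → ℝ≥0∞) (lam sg2 : Fin m → ℝ)
  (hmass : ∀ j, ∑' k : ℕ, pcol j k = 1)
  (hlam : ∀ j, ∑' k : ℕ, pcol j k * (k : ℝ≥0∞) = ENNReal.ofReal (lam j))
  (hlam0 : ∀ j, 0 ≤ lam j)
  (hsq : ∀ j, ∑' k : ℕ, pcol j k * (k : ℝ≥0∞) ^ 2 = ENNReal.ofReal (sg2 j + lam j ^ 2))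
  (hsg0 : ∀ j, 0 ≤ sg2 j)
set_option linter.unusedSectionVars false
include hmass hlam hlam0 hsq hsg0

lemma aux_row_mass : ∑' v : Fin m → ℕ, ∏ j, pcol j (v j) = 1 := by
  rw [tsum_pi_prod]; simp [hmass]

lemma aux_row_mean :
    ∑' v : Fin m → ℕ, (∏ j, pcol j (v j)) * (∑ j, (v j : ℝ≥0∞))
      = ENNReal.ofReal (∑ j, lam j) := by
  have : ∀ v : Fin m → ℕ, (∏ j, pcol j (v j)) * (∑ j, (v j : ℝ≥0∞))
      = ∑ j, (∏ l, pcol l (v l)) * (v j : ℝ≥0∞) := fun v => Finset.mul_sum _ _ _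
  simp only [this]
  rw [Summable.tsum_finsetSum (fun j _ => ENNReal.summable)]
  have : ∀ j : Fin m, (∑' v : Fin m → ℕ, (∏ l, pcol l (v l)) * ((v j : ℕ) : ℝ≥0∞))
      = ENNReal.ofReal (lam j) := by
    intro j
    rw [tsum_pi_prod_mul pcol hmass j (fun k => (k : ℝ≥0∞))]
    exact hlam j
  simp only [this]
  rw [← ENNReal.ofReal_sum_of_nonneg (fun j _ => hlam0 j)]

lemma aux_row_sq :
    ∑' v : Fin m → ℕ, (∏ j, pcol j (v j)) * (∑ j, (v j : ℝ≥0∞)) ^ 2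
      = ENNReal.ofReal ((∑ j, sg2 j) + (∑ j, lam j) ^ 2) := by
  have expand : ∀ v : Fin m → ℕ, (∏ j, pcol j (v j)) * (∑ j, (v j : ℝ≥0∞)) ^ 2
      = ∑ j, ∑ l, (∏ r, pcol r (v r)) * ((v j : ℝ≥0∞) * (v l : ℝ≥0∞)) := by
    intro v
    rw [sq, Finset.sum_mul_sum, Finset.mul_sum]
    refine Finset.sum_congr rfl fun j _ => ?_
    rw [Finset.mul_sum]
  simp only [expand]
  rw [Summable.tsum_finsetSum (fun j _ => ENNReal.summable)]
  have inner : ∀ j : Fin m, (∑' v : Fin m → ℕ, ∑ l, (∏ r, pcol r (v r)) * ((v j : ℝ≥0∞) * (v l : ℝ≥0∞)))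
      = ∑ l, ∑' v : Fin m → ℕ, (∏ r, pcol r (v r)) * ((v j : ℝ≥0∞) * (v l : ℝ≥0∞)) :=
    fun j => Summable.tsum_finsetSum (fun l _ => ENNReal.summable)
  simp only [inner]
  have term : ∀ j l : Fin m, (∑' v : Fin m → ℕ, (∏ r, pcol r (v r)) * ((v j : ℝ≥0∞) * (v l : ℝ≥0∞)))
      = ENNReal.ofReal (lam j * lam l) + (if j = l then ENNReal.ofReal (sg2 j) else 0) := by
    intro j l
    by_cases hjl : j = l
    · subst hjl
      have : ∀ v : Fin m → ℕ, (∏ r, pcol r (v r)) * ((v j : ℝ≥0∞) * (v j : ℝ≥0∞))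
          = (∏ r, pcol r (v r)) * (fun k : ℕ => (k : ℝ≥0∞) ^ 2) (v j) := by
        intro v; simp [sq]
      simp only [this]
      rw [tsum_pi_prod_mul pcol hmass j (fun k => (k : ℝ≥0∞) ^ 2), hsq j]
      rw [if_pos trivial, ← ENNReal.ofReal_add (mul_nonneg (hlam0 j) (hlam0 j)) (hsg0 j)]
      congr 1; ring
    · rw [tsum_pi_prod_mul₂ pcol hmass j l hjl (fun k => (k : ℝ≥0∞)) (fun k => (k : ℝ≥0∞)),
        hlam j, hlam l, if_neg hjl, add_zero,
        ← ENNReal.ofReal_mul (hlam0 j)]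
  simp only [term]
  rw [Finset.sum_congr rfl (fun j _ => Finset.sum_add_distrib)]
  rw [Finset.sum_add_distrib]
  have e1 : ∑ j : Fin m, ∑ l : Fin m, ENNReal.ofReal (lam j * lam l)
      = ENNReal.ofReal ((∑ j, lam j) ^ 2) := by
    have inner2 : ∀ j, ∑ l : Fin m, ENNReal.ofReal (lam j * lam l)
        = ENNReal.ofReal (∑ l, lam j * lam l) := fun j =>
      (ENNReal.ofReal_sum_of_nonneg (fun l _ => mul_nonneg (hlam0 j) (hlam0 l))).symm
    simp only [inner2]
    rw [← ENNReal.ofReal_sum_of_nonneg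
      (fun j (_ : j ∈ Finset.univ) => Finset.sum_nonneg fun l _ => mul_nonneg (hlam0 j) (hlam0 l))]
    congr 1
    rw [sq, Finset.sum_mul_sum]
  have e2 : ∑ j : Fin m, ∑ l : Fin m, (if j = l then ENNReal.ofReal (sg2 j) else 0)
      = ENNReal.ofReal (∑ j, sg2 j) := by
    simp only [Finset.sum_ite_eq, Finset.mem_univ, if_pos]
    exact (ENNReal.ofReal_sum_of_nonneg (fun j _ => hsg0 j)).symm
  rw [e1, e2, ← ENNReal.ofReal_add (by positivity) (Finset.sum_nonneg fun j _ => hsg0 j)]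
  congr 1; ring
end Row

lemma aux_stationarity (n : ℕ) (A : Fin n → Fin n → ℕ → ℝ≥0∞)
    (pol pd : _) (hpd : IsInvariant n (kernelPol n A pol) pd)
    (f : (Fin n → Fin n → ℕ) → ℝ≥0∞) :
    ∑' q : Fin n → Fin n → ℕ, pd q *
        (∑' a : Fin n → Fin n → ℕ, ∑' s : Fin n → Fin n → ℕ,
          jointA n A a * pol q s * f (nextQ n q a s))
      = ∑' q : Fin n → Fin n → ℕ, pd q * f q := by
  have key : ∀ q, (∑' (a : Fin n → Fin n → ℕ) (s : Fin n → Fin n → ℕ),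
      jointA n A a * pol q s * f (nextQ n q a s))
      = ∑' q', kernelPol n A pol q q' * f q' := by
    intro q
    symm
    calc ∑' q', kernelPol n A pol q q' * f q'
        = ∑' (q' : Fin n → Fin n → ℕ) (a : Fin n → Fin n → ℕ) (s : Fin n → Fin n → ℕ),
            jointA n A a * pol q s * (if nextQ n q a s = q' then 1 else 0) * f q' := by
          simp only [kernelPol, ENNReal.tsum_mul_right]
      _ = ∑' (a : Fin n → Fin n → ℕ) (q' : Fin n → Fin n → ℕ) (s : Fin n → Fin n → ℕ),
            jointA n A a * pol q s * (if nextQ n q a s = q' then 1 else 0) * f q' :=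
          ENNReal.tsum_comm
      _ = ∑' (a : Fin n → Fin n → ℕ) (s : Fin n → Fin n → ℕ) (q' : Fin n → Fin n → ℕ),
            jointA n A a * pol q s * (if nextQ n q a s = q' then 1 else 0) * f q' :=
          tsum_congr fun a => ENNReal.tsum_comm
      _ = ∑' (a : Fin n → Fin n → ℕ) (s : Fin n → Fin n → ℕ), jointA n A a * pol q s * f (nextQ n q a s) := by
          refine tsum_congr fun a => tsum_congr fun s => ?_
          have := tsum_eq_single (L := SummationFilter.unconditional _) (f := fun q' => jointA n A a * pol q s *
              (if nextQ n q a s = q' then 1 else 0) * f q') (nextQ n q a s)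
            (fun b hb => by simp [Ne.symm hb])
          rw [this]; simp
  calc ∑' q, pd q * (∑' (a : Fin n → Fin n → ℕ) (s : Fin n → Fin n → ℕ),
          jointA n A a * pol q s * f (nextQ n q a s))
      = ∑' q, ∑' q', pd q * (kernelPol n A pol q q' * f q') := by
        simp only [key, ENNReal.tsum_mul_left]
    _ = ∑' q', (∑' q, pd q * kernelPol n A pol q q') * f q' := by
        rw [ENNReal.tsum_comm]
        refine tsum_congr fun q' => ?_
        simp only [← mul_assoc]
        exact ENNReal.tsum_mul_right
    _ = ∑' q', pd q' * f q' := by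
        exact tsum_congr fun q' => by rw [hpd.2 q']


lemma aux_sum_tsub {m : ℕ} (f g : Fin m → ℕ) :
    (∑ j, f j) - (∑ j, g j) ≤ ∑ j, (f j - g j) := by
  rw [tsub_le_iff_right, ← Finset.sum_add_distrib]
  exact Finset.sum_le_sum fun j _ => le_tsub_add

lemma aux_id1E (x y : ℕ) :
    ((x + y - 1 : ℕ) : ℝ≥0∞) ^ 2
      + (2 * ((x : ℝ≥0∞) + (y : ℝ≥0∞)) + ((if x + y = 0 then 1 else 0 : ℕ) : ℝ≥0∞))
    = ((x : ℝ≥0∞) + (y : ℝ≥0∞)) ^ 2 + 1 := by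
  by_cases hxy : x + y = 0
  · obtain ⟨hx, hy⟩ := Nat.add_eq_zero.mp hxy
    subst hx; subst hy; simp
  · obtain ⟨t, ht⟩ : ∃ t, x + y = t + 1 :=
      ⟨x + y - 1, (Nat.succ_pred_eq_of_pos (Nat.pos_of_ne_zero hxy)).symm⟩
    have hc : ((x : ℝ≥0∞) + (y : ℝ≥0∞)) = (t : ℝ≥0∞) + 1 := by
      rw [← Nat.cast_add, ht]; push_cast; ring
    rw [if_neg hxy, show x + y - 1 = t by omega, hc]
    push_cast; ring

lemma aux_id2E (x y : ℕ) :
    ((x + y - 1 : ℕ) : ℝ≥0∞) + 1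
      = ((x : ℝ≥0∞) + (y : ℝ≥0∞)) + ((if x + y = 0 then 1 else 0 : ℕ) : ℝ≥0∞) := by
  by_cases hxy : x + y = 0
  · obtain ⟨hx, hy⟩ := Nat.add_eq_zero.mp hxy
    subst hx; subst hy; simp
  · obtain ⟨t, ht⟩ : ∃ t, x + y = t + 1 :=
      ⟨x + y - 1, (Nat.succ_pred_eq_of_pos (Nat.pos_of_ne_zero hxy)).symm⟩
    have hc : ((x : ℝ≥0∞) + (y : ℝ≥0∞)) = (t : ℝ≥0∞) + 1 := by
      rw [← Nat.cast_add, ht]; push_cast; ring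
    rw [if_neg hxy, show x + y - 1 = t by omega, hc]
    push_cast; ring

lemma aux_key (n : ℕ) (A : Fin n → Fin n → ℕ → ℝ≥0∞)
    (pol : (Fin n → Fin n → ℕ) → (Fin n → Fin n → ℕ) → ℝ≥0∞)
    (hpol1 : ∀ q, (∑' s : Fin n → Fin n → ℕ, pol q s) = 1)
    (hpol2 : ∀ q s, pol q s ≠ 0 → IsSchedule n s)
    (pd : (Fin n → Fin n → ℕ) → ℝ≥0∞)
    (hpd : IsInvariant n (kernelPol n A pol) pd)
    (i : Fin n) (a1 a2 : ℝ) (ha10 : 0 ≤ a1) (ha20 : 0 ≤ a2)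
    (hjmass : ∑' a : Fin n → Fin n → ℕ, jointA n A a = 1)
    (hEA : ∑' a : Fin n → Fin n → ℕ, jointA n A a * ((∑ j, a i j : ℕ) : ℝ≥0∞)
      = ENNReal.ofReal a1)
    (hEA2 : ∑' a : Fin n → Fin n → ℕ, jointA n A a * ((∑ j, a i j : ℕ) : ℝ≥0∞) ^ 2
      = ENNReal.ofReal a2)
    (hfinX2 : (∑' q : Fin n → Fin n → ℕ, pd q * ((∑ j, q i j : ℕ) : ℝ≥0∞) ^ 2) ≠ ⊤) :
    a2 - a1 ≤ 2 * (∑' q : Fin n → Fin n → ℕ, pd q * ((∑ j, q i j : ℕ) : ℝ≥0∞)).toReal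
      * (1 - a1)
    ∧ (∑' q : Fin n → Fin n → ℕ, pd q * ((∑ j, q i j : ℕ) : ℝ≥0∞)) ≠ ⊤ := by
  classical
  have hpdmass := hpd.1
  set XN : (Fin n → Fin n → ℕ) → ℕ := fun q => ∑ j, q i j with hXNdef
  set EX := ∑' q : Fin n → Fin n → ℕ, pd q * (XN q : ℝ≥0∞) with hEXdef
  set EX2 := ∑' q : Fin n → Fin n → ℕ, pd q * (XN q : ℝ≥0∞) ^ 2 with hEX2def
  set Yf : (Fin n → Fin n → ℕ) → (Fin n → Fin n → ℕ) → ℕ :=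
    fun q a => XN q + XN a - 1 with hYfdef
  set uf : (Fin n → Fin n → ℕ) → (Fin n → Fin n → ℕ) → ℕ :=
    fun q a => if XN q + XN a = 0 then 1 else 0 with hufdef
  -- the double expectation operator
  set E2 : ((Fin n → Fin n → ℕ) → (Fin n → Fin n → ℕ) → ℝ≥0∞) → ℝ≥0∞ :=
    fun F => ∑' q : Fin n → Fin n → ℕ, pd q *
      ∑' a : Fin n → Fin n → ℕ, jointA n A a * F q a with hE2def
  set EY := E2 (fun q a => (Yf q a : ℝ≥0∞)) with hEYdef
  set EY2 := E2 (fun q a => (Yf q a : ℝ≥0∞) ^ 2) with hEY2def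
  set Eu := E2 (fun q a => (uf q a : ℝ≥0∞)) with hEudef
  -- basic helpers
  have hconsta : ∀ c : ℝ≥0∞, (∑' a : Fin n → Fin n → ℕ, jointA n A a * c) = c := fun c => by
    rw [ENNReal.tsum_mul_right, hjmass, one_mul]
  have hconstq : ∀ c : ℝ≥0∞, (∑' q : Fin n → Fin n → ℕ, pd q * c) = c := fun c => by
    rw [ENNReal.tsum_mul_right, hpdmass, one_mul]
  have hsplitA : ∀ g h : (Fin n → Fin n → ℕ) → ℝ≥0∞,
      (∑' a : Fin n → Fin n → ℕ, jointA n A a * (g a + h a))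
        = (∑' a : Fin n → Fin n → ℕ, jointA n A a * g a)
          + (∑' a : Fin n → Fin n → ℕ, jointA n A a * h a) := by
    intro g h
    rw [← ENNReal.tsum_add]
    exact tsum_congr fun a => mul_add _ _ _
  have hsplitQ : ∀ g h : (Fin n → Fin n → ℕ) → ℝ≥0∞,
      (∑' q : Fin n → Fin n → ℕ, pd q * (g q + h q))
        = (∑' q : Fin n → Fin n → ℕ, pd q * g q)
          + (∑' q : Fin n → Fin n → ℕ, pd q * h q) := by
    intro g h
    rw [← ENNReal.tsum_add]
    exact tsum_congr fun q => mul_add _ _ _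
  have hsplit2 : ∀ F G : (Fin n → Fin n → ℕ) → (Fin n → Fin n → ℕ) → ℝ≥0∞,
      E2 (fun q a => F q a + G q a) = E2 F + E2 G := by
    intro F G
    rw [hE2def]
    calc (∑' q : Fin n → Fin n → ℕ, pd q *
          ∑' a : Fin n → Fin n → ℕ, jointA n A a * (F q a + G q a))
        = ∑' q : Fin n → Fin n → ℕ, pd q *
            ((∑' a : Fin n → Fin n → ℕ, jointA n A a * F q a)
              + (∑' a : Fin n → Fin n → ℕ, jointA n A a * G q a)) :=
          tsum_congr fun q => by rw [hsplitA]
      _ = E2 F + E2 G := hsplitQ _ _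
  have hscale2 : ∀ (c : ℝ≥0∞) (F : (Fin n → Fin n → ℕ) → (Fin n → Fin n → ℕ) → ℝ≥0∞),
      E2 (fun q a => c * F q a) = c * E2 F := by
    intro c F
    rw [hE2def]
    calc (∑' q : Fin n → Fin n → ℕ, pd q *
          ∑' a : Fin n → Fin n → ℕ, jointA n A a * (c * F q a))
        = ∑' q : Fin n → Fin n → ℕ, c * (pd q *
            ∑' a : Fin n → Fin n → ℕ, jointA n A a * F q a) := by
          refine tsum_congr fun q => ?_
          rw [show ∀ x : ℝ≥0∞, pd q * x = pd q * x from fun _ => rfl]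
          have : (∑' a : Fin n → Fin n → ℕ, jointA n A a * (c * F q a))
              = c * ∑' a : Fin n → Fin n → ℕ, jointA n A a * F q a := by
            rw [← ENNReal.tsum_mul_left]
            exact tsum_congr fun a => by ring
          rw [this]; ring
      _ = c * E2 F := ENNReal.tsum_mul_left
  have hconst2 : ∀ c : ℝ≥0∞, E2 (fun _ _ => c) = c := by
    intro c
    rw [hE2def]
    simp only [hconsta]
    exact hconstq c
  have hq2 : ∀ G : (Fin n → Fin n → ℕ) → ℝ≥0∞,
      E2 (fun q _ => G q) = ∑' q : Fin n → Fin n → ℕ, pd q * G q := by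
    intro G
    rw [hE2def]
    exact tsum_congr fun q => by rw [hconsta]
  have ha2 : ∀ G : (Fin n → Fin n → ℕ) → ℝ≥0∞,
      E2 (fun _ a => G a) = ∑' a : Fin n → Fin n → ℕ, jointA n A a * G a := by
    intro G
    rw [hE2def]
    exact hconstq _
  -- key atomic expectations
  have hEXa : E2 (fun q _ => (XN q : ℝ≥0∞)) = EX := hq2 _
  have hEX2a : E2 (fun q _ => (XN q : ℝ≥0∞) ^ 2) = EX2 := hq2 _
  have hEAa : E2 (fun _ a => (XN a : ℝ≥0∞)) = ENNReal.ofReal a1 := by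
    rw [ha2]; exact hEA
  have hEA2a : E2 (fun _ a => (XN a : ℝ≥0∞) ^ 2) = ENNReal.ofReal a2 := by
    rw [ha2]; exact hEA2
  have hcross : E2 (fun q a => (XN q : ℝ≥0∞) * (XN a : ℝ≥0∞)) = EX * ENNReal.ofReal a1 := by
    rw [hE2def]
    calc (∑' q : Fin n → Fin n → ℕ, pd q *
          ∑' a : Fin n → Fin n → ℕ, jointA n A a * ((XN q : ℝ≥0∞) * (XN a : ℝ≥0∞)))
        = ∑' q : Fin n → Fin n → ℕ, (pd q * (XN q : ℝ≥0∞)) * ENNReal.ofReal a1 := by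
          refine tsum_congr fun q => ?_
          have : (∑' a : Fin n → Fin n → ℕ, jointA n A a * ((XN q : ℝ≥0∞) * (XN a : ℝ≥0∞)))
              = (XN q : ℝ≥0∞) * ∑' a : Fin n → Fin n → ℕ, jointA n A a * (XN a : ℝ≥0∞) := by
            rw [← ENNReal.tsum_mul_left]
            exact tsum_congr fun a => by ring
          rw [this, hEA]
          ring
      _ = EX * ENNReal.ofReal a1 := by rw [ENNReal.tsum_mul_right, hEXdef]
  -- finiteness of EX
  have hEXle : EX ≤ EX2 + 1 := by
    rw [hEXdef, hEX2def, ← hconstq 1, ← ENNReal.tsum_add]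
    refine Summable.tsum_le_tsum (fun q => ?_) ENNReal.summable ENNReal.summable
    rw [← mul_add]
    refine mul_le_mul_right ?_ _
    have hn : XN q ≤ XN q ^ 2 + 1 :=
      le_trans (Nat.le_self_pow two_ne_zero _) (Nat.le_succ _)
    calc (XN q : ℝ≥0∞) ≤ ((XN q ^ 2 + 1 : ℕ) : ℝ≥0∞) := Nat.cast_le.mpr hn
      _ = (XN q : ℝ≥0∞) ^ 2 + 1 := by push_cast; ring
  have hEX2top : EX2 ≠ ⊤ := hfinX2
  have hEXtop : EX ≠ ⊤ :=
    (hEXle.trans_lt (ENNReal.add_lt_top.mpr ⟨hEX2top.lt_top, ENNReal.one_lt_top⟩)).ne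
  -- monotone bound on next state
  have hmono : ∀ q a s, IsSchedule n s → Yf q a ≤ XN (nextQ n q a s) := by
    intro q a s hs
    have h1 : XN q + XN a - (∑ j, s i j) ≤ XN (nextQ n q a s) := by
      have := aux_sum_tsub (fun j => q i j + a i j) (fun j => s i j)
      rw [Finset.sum_add_distrib] at this
      exact this
    exact le_trans (tsub_le_tsub_left (hs.2.1 i) _) h1
  -- stationarity bounds
  have hinner : ∀ (g : ℕ → ℝ≥0∞), Monotone g → ∀ q,
      (∑' a : Fin n → Fin n → ℕ, jointA n A a * g (Yf q a))
        ≤ ∑' a : Fin n → Fin n → ℕ, ∑' s : Fin n → Fin n → ℕ,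
            jointA n A a * pol q s * g (XN (nextQ n q a s)) := by
    intro g hg q
    have heq : (∑' a : Fin n → Fin n → ℕ, jointA n A a * g (Yf q a))
        = ∑' a : Fin n → Fin n → ℕ, ∑' s : Fin n → Fin n → ℕ,
            (jointA n A a * g (Yf q a)) * pol q s := by
      refine tsum_congr fun a => ?_
      rw [ENNReal.tsum_mul_left, hpol1 q, mul_one]
    rw [heq]
    refine Summable.tsum_le_tsum (fun a => Summable.tsum_le_tsum (fun s => ?_) ENNReal.summable
      ENNReal.summable) ENNReal.summable ENNReal.summable
    by_cases hps : pol q s = 0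
    · simp [hps]
    · rw [mul_right_comm]
      exact mul_le_mul_right (hg (hmono q a s (hpol2 q s hps))) _
  have hY2le : EY2 ≤ EX2 := by
    have hst := aux_stationarity n A pol pd hpd (fun q => (XN q : ℝ≥0∞) ^ 2)
    rw [hEY2def, hE2def, hEX2def, ← hst]
    exact Summable.tsum_le_tsum (fun q => mul_le_mul_right
      (hinner (fun k => (k : ℝ≥0∞) ^ 2)
        (fun u v huv => pow_le_pow_left' (Nat.cast_le.mpr huv) 2) q) _)
      ENNReal.summable ENNReal.summable
  have hYle : EY ≤ EX := by
    have hst := aux_stationarity n A pol pd hpd (fun q => (XN q : ℝ≥0∞))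
    rw [hEYdef, hE2def, hEXdef, ← hst]
    exact Summable.tsum_le_tsum (fun q => mul_le_mul_right
      (hinner (fun k => (k : ℝ≥0∞)) (fun u v huv => Nat.cast_le.mpr huv) q) _)
      ENNReal.summable ENNReal.summable
  -- balance identities
  have hptw : ∀ F G : (Fin n → Fin n → ℕ) → (Fin n → Fin n → ℕ) → ℝ≥0∞,
      (∀ q a, F q a = G q a) → E2 F = E2 G := by
    intro F G h
    rw [hE2def]
    exact tsum_congr fun q => by
      congr 1
      exact tsum_congr fun a => by rw [h q a]
  have hmidL : E2 (fun q a => (Yf q a : ℝ≥0∞) ^ 2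
      + (2 * ((XN q : ℝ≥0∞) + (XN a : ℝ≥0∞)) + (uf q a : ℝ≥0∞)))
      = EY2 + (2 * EX + 2 * ENNReal.ofReal a1 + Eu) := by
    rw [hsplit2 (fun q a => (Yf q a : ℝ≥0∞) ^ 2)
        (fun q a => 2 * ((XN q : ℝ≥0∞) + (XN a : ℝ≥0∞)) + (uf q a : ℝ≥0∞)),
      hsplit2 (fun q a => 2 * ((XN q : ℝ≥0∞) + (XN a : ℝ≥0∞)))
        (fun q a => (uf q a : ℝ≥0∞)),
      hscale2 2 (fun q a => (XN q : ℝ≥0∞) + (XN a : ℝ≥0∞)),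
      hsplit2 (fun q _ => (XN q : ℝ≥0∞)) (fun _ a => (XN a : ℝ≥0∞)),
      hEXa, hEAa, hEY2def, hEudef]
    ring
  have hmidR : E2 (fun q a => ((XN q : ℝ≥0∞) + (XN a : ℝ≥0∞)) ^ 2 + 1)
      = EX2 + (2 * (EX * ENNReal.ofReal a1) + ENNReal.ofReal a2) + 1 := by
    rw [hsplit2 (fun q a => ((XN q : ℝ≥0∞) + (XN a : ℝ≥0∞)) ^ 2) (fun _ _ => 1),
      hconst2]
    congr 1
    have hexp : E2 (fun q a => ((XN q : ℝ≥0∞) + (XN a : ℝ≥0∞)) ^ 2)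
        = E2 (fun q a => (XN q : ℝ≥0∞) ^ 2
            + (2 * ((XN q : ℝ≥0∞) * (XN a : ℝ≥0∞)) + (XN a : ℝ≥0∞) ^ 2)) :=
      hptw _ _ fun q a => by ring
    rw [hexp,
      hsplit2 (fun q _ => (XN q : ℝ≥0∞) ^ 2)
        (fun q a => 2 * ((XN q : ℝ≥0∞) * (XN a : ℝ≥0∞)) + (XN a : ℝ≥0∞) ^ 2),
      hsplit2 (fun q a => 2 * ((XN q : ℝ≥0∞) * (XN a : ℝ≥0∞)))
        (fun _ a => (XN a : ℝ≥0∞) ^ 2),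
      hscale2 2 (fun q a => (XN q : ℝ≥0∞) * (XN a : ℝ≥0∞)),
      hcross, hEX2a, hEA2a]
  have hE1 : EY2 + (2 * EX + 2 * ENNReal.ofReal a1 + Eu)
      = EX2 + (2 * (EX * ENNReal.ofReal a1) + ENNReal.ofReal a2) + 1 := by
    rw [← hmidL, ← hmidR]
    exact hptw _ _ fun q a => aux_id1E (XN q) (XN a)
  have hmidL2 : E2 (fun q a => (Yf q a : ℝ≥0∞) + 1) = EY + 1 := by
    rw [hsplit2 (fun q a => (Yf q a : ℝ≥0∞)) (fun _ _ => 1), hconst2, hEYdef]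
  have hmidR2 : E2 (fun q a => ((XN q : ℝ≥0∞) + (XN a : ℝ≥0∞)) + (uf q a : ℝ≥0∞))
      = EX + ENNReal.ofReal a1 + Eu := by
    rw [hsplit2 (fun q a => (XN q : ℝ≥0∞) + (XN a : ℝ≥0∞))
        (fun q a => (uf q a : ℝ≥0∞)),
      hsplit2 (fun q _ => (XN q : ℝ≥0∞)) (fun _ a => (XN a : ℝ≥0∞)),
      hEXa, hEAa, hEudef]
  have hE2bal : EY + 1 = EX + ENNReal.ofReal a1 + Eu := by
    rw [← hmidL2, ← hmidR2]
    exact hptw _ _ fun q a => aux_id2E (XN q) (XN a)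
  -- Eu bounded by one
  have hEule : Eu ≤ 1 := by
    rw [hEudef, ← hconst2 1]
    rw [hE2def]
    refine Summable.tsum_le_tsum (fun q => mul_le_mul_right ?_ _) ENNReal.summable ENNReal.summable
    refine Summable.tsum_le_tsum (fun a => mul_le_mul_right ?_ _) ENNReal.summable ENNReal.summable
    simp only [hufdef]
    split_ifs <;> simp
  -- finiteness
  have hEY2top : EY2 ≠ ⊤ := ne_top_of_le_ne_top hEX2top hY2le
  have hEYtop : EY ≠ ⊤ := ne_top_of_le_ne_top hEXtop hYle
  have hEutop : Eu ≠ ⊤ := ne_top_of_le_ne_top ENNReal.one_ne_top hEule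
  -- pass to the reals
  have hr1 := congrArg ENNReal.toReal hE1
  rw [ENNReal.toReal_add (by finiteness) ENNReal.one_ne_top,
      ENNReal.toReal_add hEX2top (by finiteness),
      ENNReal.toReal_add (by finiteness) ENNReal.ofReal_ne_top,
      ENNReal.toReal_add hEY2top (by finiteness),
      ENNReal.toReal_add (by finiteness) hEutop,
      ENNReal.toReal_add (by finiteness) (by finiteness),
      ENNReal.toReal_mul, ENNReal.toReal_mul, ENNReal.toReal_mul, ENNReal.toReal_mul,
      ENNReal.toReal_ofReal ha10, ENNReal.toReal_ofReal ha20,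
      ENNReal.toReal_one, ENNReal.toReal_ofNat] at hr1
  have hr2 := congrArg ENNReal.toReal hE2bal
  rw [ENNReal.toReal_add hEYtop ENNReal.one_ne_top,
      ENNReal.toReal_add (by finiteness) hEutop,
      ENNReal.toReal_add hEXtop ENNReal.ofReal_ne_top,
      ENNReal.toReal_ofReal ha10, ENNReal.toReal_one] at hr2
  have hy2r : EY2.toReal ≤ EX2.toReal := ENNReal.toReal_mono hEX2top hY2le
  have hyr : EY.toReal ≤ EX.toReal := ENNReal.toReal_mono hEXtop hYle
  have her : 0 ≤ Eu.toReal := ENNReal.toReal_nonneg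
  exact ⟨by nlinarith [hr1, hr2, hy2r, hyr, her], hEXtop⟩


noncomputable def rowP (n : ℕ) (A : Fin n → Fin n → ℕ → ℝ≥0∞) (i : Fin n) (v : Fin n → ℕ) :
    ℝ≥0∞ := ∏ j, A i j (v j)

lemma jointA_eq (n : ℕ) (A : Fin n → Fin n → ℕ → ℝ≥0∞) (a : Fin n → Fin n → ℕ) :
    jointA n A a = ∏ i, rowP n A i (a i) := rfl



/-- Proposition 3.1, fixed-ε version: universal lower bound on the
steady-state expected total queue length under an arbitrary scheduling policy. -/
theorem universal_lower_bound
    (n : ℕ) (hn : 1 ≤ n) (ε : ℝ) (hε0 : 0 < ε) (hε1 : ε < 1)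
    (ν : Fin n → Fin n → ℝ) (hν : memF n ν)
    (sig : Fin n → Fin n → ℝ) (amax : ℕ) (hamax : 1 ≤ amax)
    (A : Fin n → Fin n → ℕ → ℝ≥0∞)
    (hA : ArrivalDist n A (fun i j => (1 - ε) * ν i j) sig amax)
    (pol : (Fin n → Fin n → ℕ) → (Fin n → Fin n → ℕ) → ℝ≥0∞)
    (hpol1 : ∀ q, (∑' s : Fin n → Fin n → ℕ, pol q s) = 1)
    (hpol2 : ∀ q s, pol q s ≠ 0 → IsSchedule n s)
    (pd : (Fin n → Fin n → ℕ) → ℝ≥0∞)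
    (hpd : IsInvariant n (kernelPol n A pol) pd)
    (hfin : Etot2 n pd ≠ ⊤) :
    ENNReal.ofReal ((∑ i, ∑ j, (sig i j) ^ 2) / (2 * ε) - n * (1 - ε) / 2) ≤ Etot n pd := by

  classical
  obtain ⟨hν0, hνrow, hνcol⟩ := hν
  obtain ⟨hA1, hA2, hA3, hA4⟩ := hA
  have hε1' : (0:ℝ) ≤ 1 - ε := by linarith
  have hcm : ∀ i j, (∑' k : ℕ, A i j k * (k : ℝ≥0∞)) = ENNReal.ofReal ((1 - ε) * ν i j)
      ∧ (∑' k : ℕ, A i j k * (k : ℝ≥0∞) ^ 2)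
        = ENNReal.ofReal ((sig i j) ^ 2 + ((1 - ε) * ν i j) ^ 2) :=
    fun i j => aux_coord_moments (A i j) amax _ _ (hA1 i j) (hA2 i j) (hA3 i j) (hA4 i j)
  have hlam0 : ∀ i j, 0 ≤ (1 - ε) * ν i j := fun i j => mul_nonneg hε1' (hν0 i j)
  have hsg0 : ∀ i j, (0:ℝ) ≤ (sig i j) ^ 2 := fun i j => sq_nonneg _
  have hrowsum : ∀ i, (∑ j, (1 - ε) * ν i j) = 1 - ε := by
    intro i; rw [← Finset.mul_sum, hνrow i, mul_one]
  have hrmass : ∀ i, (∑' v : Fin n → ℕ, ∏ j, A i j (v j)) = 1 := fun i =>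
    aux_row_mass (A i) (fun j => (1 - ε) * ν i j) (fun j => (sig i j) ^ 2)
      (fun j => hA1 i j) (fun j => (hcm i j).1) (fun j => hlam0 i j)
      (fun j => (hcm i j).2) (fun j => hsg0 i j)
  have hrmean : ∀ i, (∑' v : Fin n → ℕ, (∏ j, A i j (v j)) * (∑ j, (v j : ℝ≥0∞)))
      = ENNReal.ofReal (1 - ε) := by
    intro i
    rw [aux_row_mean (A i) (fun j => (1 - ε) * ν i j) (fun j => (sig i j) ^ 2)
      (fun j => hA1 i j) (fun j => (hcm i j).1) (fun j => hlam0 i j)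
      (fun j => (hcm i j).2) (fun j => hsg0 i j), hrowsum i]
  have hrsq : ∀ i, (∑' v : Fin n → ℕ, (∏ j, A i j (v j)) * (∑ j, (v j : ℝ≥0∞)) ^ 2)
      = ENNReal.ofReal ((∑ j, (sig i j) ^ 2) + (1 - ε) ^ 2) := by
    intro i
    rw [aux_row_sq (A i) (fun j => (1 - ε) * ν i j) (fun j => (sig i j) ^ 2)
      (fun j => hA1 i j) (fun j => (hcm i j).1) (fun j => hlam0 i j)
      (fun j => (hcm i j).2) (fun j => hsg0 i j), hrowsum i]
  have hrowP : ∀ i v, rowP n A i v = ∏ j, A i j (v j) := fun i v => rfl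
  have hrmassP : ∀ i, (∑' v : Fin n → ℕ, rowP n A i v) = 1 := by
    intro i
    rw [tsum_congr (hrowP i)]
    exact hrmass i
  have hjmass : (∑' a : Fin n → Fin n → ℕ, jointA n A a) = 1 := by
    calc (∑' a : Fin n → Fin n → ℕ, jointA n A a)
        = ∑' a : Fin n → Fin n → ℕ, ∏ i, rowP n A i (a i) :=
          tsum_congr fun a => jointA_eq n A a
      _ = ∏ i, ∑' v : Fin n → ℕ, rowP n A i v := tsum_pi_prod (rowP n A)
      _ = 1 := by simp only [hrmassP]; exact Finset.prod_const_one
  have hmarg : ∀ (i : Fin n) (G : (Fin n → ℕ) → ℝ≥0∞),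
      (∑' a : Fin n → Fin n → ℕ, jointA n A a * G (a i))
        = ∑' v : Fin n → ℕ, (∏ j, A i j (v j)) * G v := by
    intro i G
    calc (∑' a : Fin n → Fin n → ℕ, jointA n A a * G (a i))
        = ∑' a : Fin n → Fin n → ℕ, (∏ i', rowP n A i' (a i')) * G (a i) :=
          tsum_congr fun a => by rw [jointA_eq]
      _ = ∑' v : Fin n → ℕ, rowP n A i v * G v := tsum_pi_prod_mul (rowP n A) hrmassP i G
      _ = ∑' v : Fin n → ℕ, (∏ j, A i j (v j)) * G v :=
          tsum_congr fun v => by rw [hrowP]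
  have hEA : ∀ i, (∑' a : Fin n → Fin n → ℕ, jointA n A a * ((∑ j, a i j : ℕ) : ℝ≥0∞))
      = ENNReal.ofReal (1 - ε) := by
    intro i
    rw [hmarg i (fun v => ((∑ j, v j : ℕ) : ℝ≥0∞)), ← hrmean i]
    exact tsum_congr fun v => by rw [Nat.cast_sum]
  have hEA2 : ∀ i, (∑' a : Fin n → Fin n → ℕ, jointA n A a * ((∑ j, a i j : ℕ) : ℝ≥0∞) ^ 2)
      = ENNReal.ofReal ((∑ j, (sig i j) ^ 2) + (1 - ε) ^ 2) := by
    intro i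
    rw [hmarg i (fun v => ((∑ j, v j : ℕ) : ℝ≥0∞) ^ 2), ← hrsq i]
    exact tsum_congr fun v => by rw [Nat.cast_sum]
  have hfinX2 : ∀ i, (∑' q : Fin n → Fin n → ℕ, pd q * ((∑ j, q i j : ℕ) : ℝ≥0∞) ^ 2) ≠ ⊤ := by
    intro i
    refine ne_top_of_le_ne_top hfin ?_
    refine Summable.tsum_le_tsum (fun q => mul_le_mul_right ?_ _) ENNReal.summable ENNReal.summable
    refine pow_le_pow_left' ?_ 2
    rw [Nat.cast_sum]
    exact Finset.single_le_sum (f := fun i' => ∑ j, ((q i' j : ℕ) : ℝ≥0∞))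
      (fun _ _ => zero_le) (Finset.mem_univ i)
  have hkey := fun i => aux_key n A pol hpol1 hpol2 pd hpd i (1 - ε)
    ((∑ j, (sig i j) ^ 2) + (1 - ε) ^ 2) hε1' (by positivity) hjmass (hEA i) (hEA2 i) (hfinX2 i)
  set EXi : Fin n → ℝ≥0∞ :=
    fun i => ∑' q : Fin n → Fin n → ℕ, pd q * ((∑ j, q i j : ℕ) : ℝ≥0∞) with hEXidef
  have hEXitop : ∀ i, EXi i ≠ ⊤ := fun i => (hkey i).2
  have hEtot : Etot n pd = ∑ i, EXi i := by
    rw [Etot, hEXidef]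
    calc (∑' q : Fin n → Fin n → ℕ, pd q * (∑ i, ∑ j, (q i j : ℝ≥0∞)))
        = ∑' q : Fin n → Fin n → ℕ, ∑ i, pd q * ((∑ j, q i j : ℕ) : ℝ≥0∞) := by
          refine tsum_congr fun q => ?_
          rw [Finset.mul_sum]
          refine Finset.sum_congr rfl fun i _ => ?_
          rw [Nat.cast_sum]
      _ = ∑ i, ∑' q : Fin n → Fin n → ℕ, pd q * ((∑ j, q i j : ℕ) : ℝ≥0∞) :=
          Summable.tsum_finsetSum (fun i _ => ENNReal.summable)
  have htr : (Etot n pd).toReal = ∑ i, (EXi i).toReal := by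
    rw [hEtot, ENNReal.toReal_sum (fun i _ => hEXitop i)]
  refine ENNReal.ofReal_le_of_le_toReal ?_
  rw [htr]
  have hkey' : ∀ i, (∑ j, (sig i j) ^ 2) - ε * (1 - ε) ≤ 2 * ε * (EXi i).toReal := by
    intro i
    have h := (hkey i).1
    nlinarith [h]
  have hsum : (∑ i, ∑ j, (sig i j) ^ 2) - (n : ℝ) * (ε * (1 - ε))
      ≤ 2 * ε * ∑ i, (EXi i).toReal := by
    have := Finset.sum_le_sum (fun i (_ : i ∈ Finset.univ) => hkey' i)
    rw [Finset.sum_sub_distrib, Finset.sum_const, Finset.card_univ, Fintype.card_fin,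
      ← Finset.mul_sum] at this
    simpa [nsmul_eq_mul] using this
  have h2ε : (0:ℝ) < 2 * ε := by linarith
  rw [sub_le_iff_le_add, div_le_iff₀ h2ε]
  nlinarith [hsum, Finset.sum_nonneg (fun i (_ : i ∈ Finset.univ) =>
    (ENNReal.toReal_nonneg : (0:ℝ) ≤ (EXi i).toReal))]
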